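/- arXiv:1101.2589 — 3 statements merged into one kernel-verified Lean document; each statement's English description precedes it below -/
import Mathlib

section
/- Let l ≥ 1 be an integer and let S be a separating union-closed family of subsets of an n-element set Ω. Then the l-fold weight satisfies w_l(S) = ∑_{A ∈ S} C(|A|, l) ≥ C(n, l+1). -/
/-- `l`-fold weight lower bound from separation: a separating union-closed
family `S` of subsets of an `n`-element set satisfies
`∑_{A ∈ S} C(|A|, l) ≥ C(n, l+1)`. -/
theorem separating_unionClosed_lfold_weight_bound {α : Type*} [DecidableEq α]
    (l : ℕ) (hl : 1 ≤ l) (Ω : Finset α) (n : ℕ) (hn : Ω.card = n)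
    (S : Finset (Finset α))
    (hsub : ∀ A ∈ S, A ⊆ Ω)
    (huc : ∀ A ∈ S, ∀ B ∈ S, A ∪ B ∈ S)
    (hsep : ∀ i ∈ Ω, ∀ j ∈ Ω, i ≠ j →
      ∃ A ∈ S, (i ∈ A ∧ j ∉ A) ∨ (j ∈ A ∧ i ∉ A)) :
    n.choose (l + 1) ≤ ∑ A ∈ S, A.card.choose l := by
  classical
  set g : α → ℕ := fun j => (S.filter (fun A => j ∈ A)).card with hg
  set Bs : α → Finset α := fun j => (S.filter (fun A => j ∉ A)).sup id with hBs
  -- key separation consequence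
  have key : ∀ i ∈ Ω, ∀ j ∈ Ω, i ≠ j → g j ≤ g i → ∃ A ∈ S, i ∈ A ∧ j ∉ A := by
    intro i hi j hj hij hle
    by_contra hcon
    push_neg at hcon
    obtain ⟨A, hA, hAij⟩ := hsep i hi j hj hij
    rcases hAij with ⟨h1, h2⟩ | ⟨h1, h2⟩
    · exact h2 (hcon A hA h1)
    · have hss : S.filter (fun A => i ∈ A) ⊂ S.filter (fun A => j ∈ A) := by
        constructor
        · intro B hB
          simp only [Finset.mem_filter] at *
          exact ⟨hB.1, hcon B hB.1 hB.2⟩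
        · intro hsub'
          have hmem : A ∈ S.filter (fun A => i ∈ A) :=
            hsub' (by simp only [Finset.mem_filter]; exact ⟨hA, h1⟩)
          simp only [Finset.mem_filter] at hmem
          exact h2 hmem.2
      have hlt := Finset.card_lt_card hss
      simp only [hg] at hle
      omega
  -- properties of Bs j when the filter is nonempty
  have hBmem : ∀ j, (S.filter (fun A => j ∉ A)).Nonempty → Bs j ∈ S := by
    intro j hne
    have : (S.filter (fun A => j ∉ A)).sup' hne id ∈ (↑S : Set (Finset α)) := by
      apply Finset.sup'_mem
      · intro x hx y hy
        have := huc x hx y hy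
        simpa [Finset.sup_eq_union] using this
      · intro A hA
        exact Finset.mem_coe.mpr (Finset.mem_filter.mp hA).1
    rwa [Finset.sup'_eq_sup] at this
  have hBnot : ∀ j, j ∉ Bs j := by
    intro j hj
    simp only [hBs] at hj
    rw [Finset.mem_sup] at hj
    obtain ⟨A, hA, hjA⟩ := hj
    simp only [Finset.mem_filter, id] at hA hjA
    exact hA.2 hjA
  have hBle : ∀ j, ∀ A ∈ S, j ∉ A → A ⊆ Bs j := by
    intro j A hA hjA
    have : A ∈ S.filter (fun A => j ∉ A) := Finset.mem_filter.mpr ⟨hA, hjA⟩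
    exact Finset.le_sup (f := id) this
  -- the injection
  set f : Finset α → (Σ _ : Finset α, Finset α) := fun T =>
    if h : ∃ j, j ∈ T ∧ ∀ i ∈ T, g j ≤ g i then
      ⟨Bs h.choose, T.erase h.choose⟩
    else ⟨∅, ∅⟩ with hf
  -- main property of f on (l+1)-subsets of Ω
  have hprop : ∀ T ∈ Ω.powersetCard (l + 1), ∃ j ∈ T,
      f T = ⟨Bs j, T.erase j⟩ ∧ Bs j ∈ S ∧ T.erase j ⊆ Bs j := by
    intro T hT
    rw [Finset.mem_powersetCard] at hT
    obtain ⟨hTΩ, hTcard⟩ := hT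
    have hTne : T.Nonempty := Finset.card_pos.mp (by omega)
    have h : ∃ j, j ∈ T ∧ ∀ i ∈ T, g j ≤ g i := Finset.exists_min_image T g hTne
    obtain ⟨hjT, hjmin⟩ := h.choose_spec
    set j := h.choose
    refine ⟨j, hjT, ?_, ?_, ?_⟩
    · simp only [hf]; rw [dif_pos h]
    · -- Bs j ∈ S : filter nonempty
      apply hBmem
      -- there is i ∈ T, i ≠ j since T.card ≥ 2
      have : (T.erase j).Nonempty := by
        apply Finset.card_pos.mp
        rw [Finset.card_erase_of_mem hjT]
        omega
      obtain ⟨i, hi⟩ := this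
      have hiT := Finset.mem_of_mem_erase hi
      have hij : i ≠ j := Finset.ne_of_mem_erase hi
      obtain ⟨A, hA, hiA, hjA⟩ := key i (hTΩ hiT) j (hTΩ hjT) hij (hjmin i hiT)
      exact ⟨A, Finset.mem_filter.mpr ⟨hA, hjA⟩⟩
    · intro i hi
      have hiT := Finset.mem_of_mem_erase hi
      have hij : i ≠ j := Finset.ne_of_mem_erase hi
      obtain ⟨A, hA, hiA, hjA⟩ := key i (hTΩ hiT) j (hTΩ hjT) hij (hjmin i hiT)
      exact hBle j A hA hjA hiA
  -- Bs is injective on elements of Ω for which Bs j ∈ S etc.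
  have hBinj : ∀ j₁ ∈ Ω, ∀ j₂ ∈ Ω, Bs j₁ = Bs j₂ →
      ((S.filter (fun A => j₁ ∉ A)).Nonempty) → j₁ = j₂ := by
    intro j₁ h₁ j₂ h₂ hBeq _
    by_contra hne
    obtain ⟨A, hA, hAij⟩ := hsep j₁ h₁ j₂ h₂ hne
    rcases hAij with ⟨ha1, ha2⟩ | ⟨ha1, ha2⟩
    · exact hBnot j₁ (hBeq ▸ hBle j₂ A hA ha2 ha1)
    · exact hBnot j₂ (hBeq ▸ hBle j₁ A hA ha2 ha1)
  -- counting
  have hcount : ∑ A ∈ S, A.card.choose l = (S.sigma fun A => A.powersetCard l).card := by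
    rw [Finset.card_sigma]
    simp [Finset.card_powersetCard]
  have hchoose : n.choose (l + 1) = (Ω.powersetCard (l + 1)).card := by
    rw [Finset.card_powersetCard, hn]
  rw [hcount, hchoose]
  apply Finset.card_le_card_of_injOn f
  · intro T hT
    obtain ⟨j, hjT, hfT, hBS, hsubB⟩ := hprop T hT
    rw [hfT, Finset.mem_coe, Finset.mem_sigma]
    refine ⟨hBS, ?_⟩
    rw [Finset.mem_powersetCard]
    refine ⟨hsubB, ?_⟩
    rw [Finset.card_erase_of_mem hjT]
    rw [Finset.mem_coe, Finset.mem_powersetCard] at hT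
    omega
  · intro T₁ hT₁ T₂ hT₂ heq
    simp only [Finset.mem_coe] at hT₁ hT₂
    obtain ⟨j₁, hj₁T, hf₁, hB₁S, hsub₁⟩ := hprop T₁ hT₁
    obtain ⟨j₂, hj₂T, hf₂, hB₂S, hsub₂⟩ := hprop T₂ hT₂
    rw [hf₁, hf₂] at heq
    have hBeq : Bs j₁ = Bs j₂ := congrArg Sigma.fst heq
    have heraseeq : T₁.erase j₁ = T₂.erase j₂ := by
      have := Sigma.mk.inj_iff.mp heq
      exact eq_of_heq this.2
    have hj₁Ω : j₁ ∈ Ω := (Finset.mem_powersetCard.mp hT₁).1 hj₁T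
    have hj₂Ω : j₂ ∈ Ω := (Finset.mem_powersetCard.mp hT₂).1 hj₂T
    have hne₁ : (S.filter (fun A => j₁ ∉ A)).Nonempty := by
      by_contra hne
      rw [Finset.not_nonempty_iff_eq_empty] at hne
      -- then Bs j₁ = ∅, but T₁.erase j₁ ⊆ Bs j₁ and erase is nonempty
      have hcard₁ := (Finset.mem_powersetCard.mp hT₁).2
      have : (T₁.erase j₁).Nonempty := by
        apply Finset.card_pos.mp
        rw [Finset.card_erase_of_mem hj₁T]
        omega
      obtain ⟨i, hi⟩ := this
      have : i ∈ Bs j₁ := hsub₁ hi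
      simp only [hBs, hne, Finset.sup_empty] at this
      exact absurd this (Finset.notMem_empty i)
    have hjeq : j₁ = j₂ := hBinj j₁ hj₁Ω j₂ hj₂Ω hBeq hne₁
    subst hjeq
    calc T₁ = insert j₁ (T₁.erase j₁) := (Finset.insert_erase hj₁T).symm
    _ = insert j₁ (T₂.erase j₁) := by rw [heraseeq]
    _ = T₂ := Finset.insert_erase hj₂T
end

section
/- Let l ≥ 1, let t ≥ 2, and let b = b_1 > b_2 > ... > b_t ≥ 0 be integers, and set m = ∑_{i=1}^t 2^{b_i}. Then ∑_{i=1}^t ( C(b_i, l)·2^{b_i}/2^l + C(b_i, l−1)·2^{b_i}/2^{l−1} ) < (1 + 2l/log₂ m) · (m/l!) · ((log₂ m)/2)^l. -/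
/-- `l`-fold weight bound for the base family: if `l ≥ 1`, `t ≥ 2`,
`b 1 > b 2 > … > b t ≥ 0` and `m = ∑ᵢ 2 ^ (b i)`, then
`∑ᵢ ( C(b i, l)·2^(b i)/2^l + C(b i, l-1)·2^(b i)/2^(l-1) )
  < (1 + 2l/log₂ m) · (m/l!) · ((log₂ m)/2)^l`. -/
theorem base_family_lfold_weight_bound (l t : ℕ) (hl : 1 ≤ l) (ht : 2 ≤ t)
    (b : ℕ → ℕ) (hdec : ∀ i j : ℕ, 1 ≤ i → i < j → j ≤ t → b j < b i)
    (m : ℕ) (hm : m = ∑ i ∈ Finset.Icc 1 t, 2 ^ b i) :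
    ∑ i ∈ Finset.Icc 1 t,
        (((b i).choose l : ℝ) * (2 : ℝ) ^ (b i) / (2 : ℝ) ^ l
          + ((b i).choose (l - 1) : ℝ) * (2 : ℝ) ^ (b i) / (2 : ℝ) ^ (l - 1))
      < (1 + 2 * (l : ℝ) / Real.logb 2 m) * ((m : ℝ) / (Nat.factorial l))
          * (Real.logb 2 m / 2) ^ l := by
  have hb1 : 1 ≤ b 1 := by
    have := hdec 1 2 le_rfl one_lt_two ht
    omega
  -- m ≥ 2 ^ b 1 + 1
  have hmge : 2 ^ b 1 + 1 ≤ m := by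
    have h12 : ({1, 2} : Finset ℕ) ⊆ Finset.Icc 1 t := by
      intro x hx
      simp only [Finset.mem_insert, Finset.mem_singleton] at hx
      simp only [Finset.mem_Icc]
      omega
    have hsub : ∑ i ∈ ({1, 2} : Finset ℕ), 2 ^ b i ≤ ∑ i ∈ Finset.Icc 1 t, 2 ^ b i :=
      Finset.sum_le_sum_of_subset h12
    rw [Finset.sum_pair (by norm_num : (1 : ℕ) ≠ 2)] at hsub
    have h2 : 1 ≤ 2 ^ b 2 := Nat.one_le_two_pow
    have step : 2 ^ b 1 + 1 ≤ 2 ^ b 1 + 2 ^ b 2 := Nat.add_le_add_left h2 _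
    rw [hm]
    exact step.trans hsub
  have hm0 : 0 < m := by
    have := Nat.one_le_two_pow (n := b 1)
    omega
  set L := Real.logb 2 m with hL
  have hBlt : (b 1 : ℝ) < L := by
    rw [hL, Real.lt_logb_iff_rpow_lt one_lt_two (by exact_mod_cast hm0)]
    rw [Real.rpow_natCast]
    have : (2 : ℝ) ^ b 1 + 1 ≤ (m : ℝ) := by exact_mod_cast hmge
    linarith
  have hB0 : (0 : ℝ) ≤ (b 1 : ℝ) := Nat.cast_nonneg _
  have hL0 : 0 < L := lt_of_le_of_lt hB0 hBlt
  have hfl : (0 : ℝ) < (Nat.factorial l : ℝ) := by exact_mod_cast (Nat.factorial_pos l)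
  have hfl1 : (0 : ℝ) < (Nat.factorial (l - 1) : ℝ) := by
    exact_mod_cast (Nat.factorial_pos (l - 1))
  have hmR : (0 : ℝ) < (m : ℝ) := by exact_mod_cast hm0
  have hble : ∀ i ∈ Finset.Icc 1 t, b i ≤ b 1 := by
    intro i hi
    rw [Finset.mem_Icc] at hi
    rcases eq_or_lt_of_le hi.1 with h | h
    · rw [← h]
    · exact (hdec 1 i le_rfl h hi.2).le
  obtain ⟨c1, hc1⟩ : ∃ c : ℝ, c = (b 1 : ℝ) ^ l / (Nat.factorial l) := ⟨_, rfl⟩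
  obtain ⟨c2, hc2⟩ : ∃ c : ℝ, c = (b 1 : ℝ) ^ (l - 1) / (Nat.factorial (l - 1)) := ⟨_, rfl⟩
  have key : ∀ i ∈ Finset.Icc 1 t,
      ((b i).choose l : ℝ) * (2 : ℝ) ^ b i / (2 : ℝ) ^ l
          + ((b i).choose (l - 1) : ℝ) * (2 : ℝ) ^ b i / (2 : ℝ) ^ (l - 1)
        ≤ (c1 / 2 ^ l + c2 / 2 ^ (l - 1)) * (2 : ℝ) ^ b i := by
    intro i hi
    have hle := hble i hi
    have h1 : ((b i).choose l : ℝ) ≤ c1 := by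
      refine (Nat.choose_le_pow_div l (b i)).trans ?_
      rw [hc1]
      gcongr
    have h2 : ((b i).choose (l - 1) : ℝ) ≤ c2 := by
      refine (Nat.choose_le_pow_div (l - 1) (b i)).trans ?_
      rw [hc2]
      gcongr
    have hp : (0 : ℝ) ≤ (2 : ℝ) ^ b i := by positivity
    have e1 : c1 / 2 ^ l * (2 : ℝ) ^ b i = c1 * 2 ^ b i / 2 ^ l := by ring
    have e2 : c2 / 2 ^ (l - 1) * (2 : ℝ) ^ b i = c2 * 2 ^ b i / 2 ^ (l - 1) := by ring
    rw [add_mul, e1, e2]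
    have g1 := mul_le_mul_of_nonneg_right h1 hp
    have g2 := mul_le_mul_of_nonneg_right h2 hp
    gcongr
  have sum1 : ∑ i ∈ Finset.Icc 1 t,
        (((b i).choose l : ℝ) * (2 : ℝ) ^ (b i) / (2 : ℝ) ^ l
          + ((b i).choose (l - 1) : ℝ) * (2 : ℝ) ^ (b i) / (2 : ℝ) ^ (l - 1))
      ≤ (c1 / 2 ^ l + c2 / 2 ^ (l - 1)) * (m : ℝ) := by
    calc ∑ i ∈ Finset.Icc 1 t,
        (((b i).choose l : ℝ) * (2 : ℝ) ^ (b i) / (2 : ℝ) ^ l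
          + ((b i).choose (l - 1) : ℝ) * (2 : ℝ) ^ (b i) / (2 : ℝ) ^ (l - 1))
        ≤ ∑ i ∈ Finset.Icc 1 t, (c1 / 2 ^ l + c2 / 2 ^ (l - 1)) * (2 : ℝ) ^ b i :=
          Finset.sum_le_sum key
      _ = (c1 / 2 ^ l + c2 / 2 ^ (l - 1)) * (m : ℝ) := by
          rw [← Finset.mul_sum]
          congr 1
          rw [hm]
          push_cast
          ring
  have hfact : (Nat.factorial l : ℝ) = l * (Nat.factorial (l - 1)) := by
    have := Nat.mul_factorial_pred (Nat.pos_iff_ne_zero.mp (Nat.lt_of_lt_of_le Nat.zero_lt_one hl))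
    exact_mod_cast this.symm
  have hLl : L ^ l = L ^ (l - 1) * L := by
    conv_lhs => rw [show l = (l - 1) + 1 by omega]
    rw [pow_succ]
  have h2l : (2 : ℝ) ^ l = 2 ^ (l - 1) * 2 := by
    conv_lhs => rw [show l = (l - 1) + 1 by omega]
    rw [pow_succ]
  have hrhs : (1 + 2 * (l : ℝ) / L) * ((m : ℝ) / (Nat.factorial l)) * (L / 2) ^ l
      = (L ^ l / ((Nat.factorial l : ℝ) * 2 ^ l)
          + L ^ (l - 1) / ((Nat.factorial (l - 1) : ℝ) * 2 ^ (l - 1))) * m := by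
    rw [div_pow, hfact, hLl, h2l]
    have hl0 : (l : ℝ) ≠ 0 := by positivity
    field_simp
  calc ∑ i ∈ Finset.Icc 1 t,
        (((b i).choose l : ℝ) * (2 : ℝ) ^ (b i) / (2 : ℝ) ^ l
          + ((b i).choose (l - 1) : ℝ) * (2 : ℝ) ^ (b i) / (2 : ℝ) ^ (l - 1))
      ≤ (c1 / 2 ^ l + c2 / 2 ^ (l - 1)) * (m : ℝ) := sum1
    _ < (L ^ l / ((Nat.factorial l : ℝ) * 2 ^ l)
          + L ^ (l - 1) / ((Nat.factorial (l - 1) : ℝ) * 2 ^ (l - 1))) * m := by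
        apply mul_lt_mul_of_pos_right _ hmR
        apply add_lt_add_of_lt_of_le
        · rw [hc1, div_div]
          gcongr
        · rw [hc2, div_div]
          gcongr
    _ = (1 + 2 * (l : ℝ) / L) * ((m : ℝ) / (Nat.factorial l)) * (L / 2) ^ l := hrhs.symm
end

section
/- Let l ≥ 1 and let S be a separating union-closed family of subsets of an n-element set Ω with l ≤ n. For an l-element subset X ⊆ Ω, let d_S(X) denote the number of members of S containing X. Then the average of d_S(X) over all l-element subsets X of Ω satisfies (1/C(n,l)) · ∑_{X ⊆ Ω, |X| = l} d_S(X) ≥ (n − l)/(l + 1). -/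
open Finset

/-- For a union-closed separating family `S` and a set `Y ⊆ Ω` of size `l+1`,
there is `A ∈ S` whose intersection with `Y` has size exactly `l`, and which is
maximal among members of `S` with that intersection. -/
lemma sep_uc_exists_max_inter {α : Type*} [DecidableEq α] (l : ℕ) (hl : 1 ≤ l)
    (Ω : Finset α) (S : Finset (Finset α))
    (huc : ∀ A ∈ S, ∀ B ∈ S, A ∪ B ∈ S)
    (hsep : ∀ i ∈ Ω, ∀ j ∈ Ω, i ≠ j →
      ∃ A ∈ S, (i ∈ A ∧ j ∉ A) ∨ (j ∈ A ∧ i ∉ A))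
    (Y : Finset α) (hYΩ : Y ⊆ Ω) (hYc : Y.card = l + 1) :
    ∃ A ∈ S, (A ∩ Y).card = l ∧ ∀ B ∈ S, B ∩ Y = A ∩ Y → B ⊆ A := by
  -- Step 1: the family of members not containing Y is nonempty
  have h2Y : 1 < Y.card := by omega
  obtain ⟨y1, hy1, y2, hy2, hne⟩ := Finset.one_lt_card.mp h2Y
  obtain ⟨B0, hB0S, hB0⟩ := hsep y1 (hYΩ hy1) y2 (hYΩ hy2) hne
  have hB0T : B0 ∈ S.filter (fun A => ¬ Y ⊆ A) := by
    simp only [mem_filter]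
    refine ⟨hB0S, ?_⟩
    rcases hB0 with ⟨_, h⟩ | ⟨_, h⟩
    · exact fun hs => h (hs hy2)
    · exact fun hs => h (hs hy1)
  obtain ⟨A0, hA0T, hA0max⟩ :=
    Finset.exists_max_image (S.filter (fun A => ¬ Y ⊆ A)) (fun A => (A ∩ Y).card) ⟨B0, hB0T⟩
  rw [mem_filter] at hA0T
  obtain ⟨hA0S, hA0nY⟩ := hA0T
  have hcardle : (A0 ∩ Y).card ≤ l := by
    have hss : A0 ∩ Y ⊂ Y := by
      refine Finset.ssubset_iff_subset_ne.mpr ⟨inter_subset_right, ?_⟩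
      intro h
      exact hA0nY (fun y hy => (mem_inter.mp (h.symm ▸ hy : y ∈ A0 ∩ Y)).1)
    have := card_lt_card hss
    omega
  have hcard : (A0 ∩ Y).card = l := by
    by_contra hne'
    have hsd : 1 < (Y \ A0).card := by
      have heq : Y \ A0 = Y \ (A0 ∩ Y) := by
        ext y; simp only [mem_sdiff, mem_inter]; tauto
      rw [heq, card_sdiff_of_subset inter_subset_right]
      omega
    obtain ⟨z1, hz1, z2, hz2, hzne⟩ := Finset.one_lt_card.mp hsd
    rw [mem_sdiff] at hz1 hz2
    obtain ⟨B, hBS, hB⟩ := hsep z1 (hYΩ hz1.1) z2 (hYΩ hz2.1) hzne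
    have key : ∀ w v : α, w ∈ Y → v ∈ Y → w ∉ A0 → v ∉ A0 → w ∈ B → v ∉ B → False := by
      intro w v hwY hvY hwA hvA hwB hvB
      have hCS : A0 ∪ B ∈ S := huc _ hA0S _ hBS
      have hCT : A0 ∪ B ∈ S.filter (fun A => ¬ Y ⊆ A) := by
        simp only [mem_filter]
        refine ⟨hCS, fun hs => ?_⟩
        have := hs hvY
        rw [mem_union] at this
        tauto
      have hsub2 : A0 ∩ Y ⊂ (A0 ∪ B) ∩ Y := by
        rw [Finset.ssubset_iff_of_subset (inter_subset_inter subset_union_left (subset_refl Y))]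
        exact ⟨w, mem_inter.mpr ⟨mem_union_right _ hwB, hwY⟩, fun h => hwA (mem_inter.mp h).1⟩
      have h1 := hA0max _ hCT
      have h2 := card_lt_card hsub2
      omega
    rcases hB with ⟨h1, h2⟩ | ⟨h1, h2⟩
    · exact key z1 z2 hz1.1 hz2.1 hz1.2 hz2.2 h1 h2
    · exact key z2 z1 hz2.1 hz1.1 hz2.2 hz1.2 h1 h2
  -- Step 2: pick a maximal member with this intersection
  have hne2 : (S.filter (fun A => A ∩ Y = A0 ∩ Y)).Nonempty :=
    ⟨A0, mem_filter.mpr ⟨hA0S, rfl⟩⟩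
  obtain ⟨A, hAT, hAmax⟩ :=
    Finset.exists_max_image (S.filter (fun A => A ∩ Y = A0 ∩ Y)) (fun A => A.card) hne2
  rw [mem_filter] at hAT
  refine ⟨A, hAT.1, by rw [hAT.2]; exact hcard, ?_⟩
  intro B hBS hBXY
  have hUS : A ∪ B ∈ S := huc _ hAT.1 _ hBS
  have hUf : A ∪ B ∈ S.filter (fun A => A ∩ Y = A0 ∩ Y) := by
    rw [mem_filter]
    refine ⟨hUS, ?_⟩
    rw [union_inter_distrib_right, hAT.2, hBXY, hAT.2, union_self]
  have hcardU := hAmax _ hUf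
  have hEq : A = A ∪ B := Finset.eq_of_subset_of_card_le subset_union_left hcardU
  intro b hb
  rw [hEq]
  exact mem_union_right _ hb

/-- Counting lemma: the number of `(l+1)`-subsets of `Ω` is at most the number of
pairs `(X, A)` with `X` an `l`-subset of `Ω`, `A ∈ S`, `X ⊆ A`. -/
lemma sep_uc_count {α : Type*} [DecidableEq α] (l : ℕ) (hl : 1 ≤ l)
    (Ω : Finset α) (S : Finset (Finset α))
    (huc : ∀ A ∈ S, ∀ B ∈ S, A ∪ B ∈ S)
    (hsep : ∀ i ∈ Ω, ∀ j ∈ Ω, i ≠ j →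
      ∃ A ∈ S, (i ∈ A ∧ j ∉ A) ∨ (j ∈ A ∧ i ∉ A)) :
    (Ω.powersetCard (l+1)).card
      ≤ ∑ X ∈ Ω.powersetCard l, (S.filter (fun A => X ⊆ A)).card := by
  rw [← Finset.card_sigma]
  have H : ∀ Y ∈ Ω.powersetCard (l+1),
      ∃ A, A ∈ S ∧ (A ∩ Y).card = l ∧ ∀ B ∈ S, B ∩ Y = A ∩ Y → B ⊆ A := by
    intro Y hY
    rw [mem_powersetCard] at hY
    obtain ⟨A, hA, h1, h2⟩ := sep_uc_exists_max_inter l hl Ω S huc hsep Y hY.1 hY.2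
    exact ⟨A, hA, h1, h2⟩
  choose! f hfS hfc hfmax using H
  apply Finset.card_le_card_of_injOn (fun Y => ⟨f Y ∩ Y, f Y⟩)
  · intro Y hY
    have hY' := mem_powersetCard.mp hY
    rw [mem_coe, mem_sigma]
    constructor
    · rw [mem_powersetCard]
      exact ⟨inter_subset_right.trans hY'.1, hfc Y hY⟩
    · rw [mem_filter]
      exact ⟨hfS Y hY, inter_subset_left⟩
  · intro Y1 hY1' Y2 hY2' heq
    have hY1 : Y1 ∈ Ω.powersetCard (l+1) := hY1'
    have hY2 : Y2 ∈ Ω.powersetCard (l+1) := hY2'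
    by_contra hYne
    have hXeq : f Y1 ∩ Y1 = f Y2 ∩ Y2 := congrArg (fun s => s.1) heq
    have hA12 : f Y2 = f Y1 := (congrArg (fun s => s.2) heq).symm
    have hXY2' : f Y1 ∩ Y2 = f Y1 ∩ Y1 := by rw [hXeq, hA12]
    set A := f Y1 with hAdef
    set X := A ∩ Y1 with hXdef
    have hXY2 : A ∩ Y2 = X := hXY2'
    have hY1' := mem_powersetCard.mp hY1
    have hY2' := mem_powersetCard.mp hY2
    have hXc : X.card = l := hfc Y1 hY1
    have hXs1 : X ⊆ Y1 := inter_subset_right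
    have hXs2 : X ⊆ Y2 := by rw [← hXY2]; exact inter_subset_right
    have hsd1 : (Y1 \ X).card = 1 := by
      rw [card_sdiff_of_subset hXs1, hY1'.2, hXc]; omega
    have hsd2 : (Y2 \ X).card = 1 := by
      rw [card_sdiff_of_subset hXs2, hY2'.2, hXc]; omega
    obtain ⟨y1, hy1⟩ := card_eq_one.mp hsd1
    obtain ⟨y2, hy2⟩ := card_eq_one.mp hsd2
    have hY1eq : Y1 = X ∪ {y1} := by
      rw [← hy1, union_sdiff_of_subset hXs1]
    have hY2eq : Y2 = X ∪ {y2} := by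
      rw [← hy2, union_sdiff_of_subset hXs2]
    have hyne : y1 ≠ y2 := by
      intro h
      exact hYne (by rw [hY1eq, hY2eq, h])
    have hy1m : y1 ∈ Y1 \ X := by rw [hy1]; exact mem_singleton_self _
    have hy2m : y2 ∈ Y2 \ X := by rw [hy2]; exact mem_singleton_self _
    rw [mem_sdiff] at hy1m hy2m
    have hy1A : y1 ∉ A := fun h => hy1m.2 (mem_inter.mpr ⟨h, hy1m.1⟩)
    have hy2A : y2 ∉ A := fun h => hy2m.2 (by rw [← hXY2]; exact mem_inter.mpr ⟨h, hy2m.1⟩)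
    obtain ⟨B, hBS, hB⟩ := hsep y1 (hY1'.1 hy1m.1) y2 (hY2'.1 hy2m.1) hyne
    have final : ∀ (w v : α) (Yv : Finset α), Yv ∈ Ω.powersetCard (l+1) → f Yv = A →
        A ∩ Yv = X → Yv = X ∪ {v} → v ∉ A → w ∉ A → w ∈ B → v ∉ B → False := by
      intro w v Yv hYv hfYv hAYv hYveq hvA hwA hwB hvB
      have hUS : A ∪ B ∈ S := huc _ (hfS Y1 hY1) _ hBS
      have hinter : (A ∪ B) ∩ Yv = X := by
        apply Finset.Subset.antisymm
        · intro c hc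
          rw [mem_inter] at hc
          have hcY := hc.2
          rw [hYveq, mem_union, mem_singleton] at hcY
          rcases hcY with h | h
          · exact h
          · subst h
            rcases mem_union.mp hc.1 with h' | h'
            · exact absurd h' hvA
            · exact absurd h' hvB
        · intro c hc
          refine mem_inter.mpr ⟨mem_union_left _ ?_, ?_⟩
          · rw [← hAYv] at hc; exact (mem_inter.mp hc).1
          · rw [← hAYv] at hc; exact (mem_inter.mp hc).2
      have hsubA : A ∪ B ⊆ f Yv := hfmax Yv hYv (A ∪ B) hUS (by rw [hinter, ← hAYv, hfYv])
      rw [hfYv] at hsubA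
      exact hwA (hsubA (mem_union_right _ hwB))
    rcases hB with ⟨h1, h2⟩ | ⟨h1, h2⟩
    · exact final y1 y2 Y2 hY2 hA12 hXY2 hY2eq hy2A hy1A h1 h2
    · exact final y2 y1 Y1 hY1 rfl rfl hY1eq hy1A hy2A h1 h2

/-- Average over `l`-subsets: for a separating union-closed family `S` of
subsets of an `n`-element set `Ω` (with `1 ≤ l ≤ n`), the average over all
`l`-element subsets `X ⊆ Ω` of the number of members of `S` containing `X`
is at least `(n - l)/(l + 1)`. -/
theorem separating_unionClosed_average_lsubset_degree {α : Type*} [DecidableEq α]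
    (l : ℕ) (hl : 1 ≤ l) (Ω : Finset α) (n : ℕ) (hn : Ω.card = n) (hln : l ≤ n)
    (S : Finset (Finset α))
    (hsub : ∀ A ∈ S, A ⊆ Ω)
    (huc : ∀ A ∈ S, ∀ B ∈ S, A ∪ B ∈ S)
    (hsep : ∀ i ∈ Ω, ∀ j ∈ Ω, i ≠ j →
      ∃ A ∈ S, (i ∈ A ∧ j ∉ A) ∨ (j ∈ A ∧ i ∉ A)) :
    ((n : ℝ) - (l : ℝ)) / ((l : ℝ) + 1)
      ≤ (1 / (n.choose l : ℝ)) *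
          ∑ X ∈ Ω.powersetCard l, ((S.filter (fun A => X ⊆ A)).card : ℝ) := by
  have hkey := sep_uc_count l hl Ω S huc hsep
  rw [Finset.card_powersetCard, hn] at hkey
  have hC : (0:ℝ) < (n.choose l : ℝ) := by
    exact_mod_cast Nat.choose_pos hln
  have h1 : ((n.choose (l+1) : ℕ) : ℝ)
      ≤ ∑ X ∈ Ω.powersetCard l, ((S.filter (fun A => X ⊆ A)).card : ℝ) := by
    have := (Nat.cast_le (α := ℝ)).mpr hkey
    push_cast at this ⊢
    exact this
  have h2 : (n.choose (l+1) : ℝ) * ((l:ℝ) + 1) = (n.choose l : ℝ) * ((n:ℝ) - (l:ℝ)) := by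
    have h' : n.choose (l+1) * (l+1) = n.choose l * (n - l) :=
      Nat.choose_succ_right_eq n l
    calc (n.choose (l+1) : ℝ) * ((l:ℝ) + 1)
        = ((n.choose (l+1) * (l+1) : ℕ) : ℝ) := by push_cast; ring
      _ = ((n.choose l * (n - l) : ℕ) : ℝ) := by rw [h']
      _ = (n.choose l : ℝ) * ((n:ℝ) - (l:ℝ)) := by
          push_cast [Nat.cast_sub hln]; ring
  have hl1 : (0:ℝ) < (l:ℝ) + 1 := by positivity
  rw [div_le_iff₀ hl1]
  have hineq : (n.choose l : ℝ) * (((n:ℝ) - (l:ℝ)))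
      ≤ (∑ X ∈ Ω.powersetCard l, ((S.filter (fun A => X ⊆ A)).card : ℝ)) * ((l:ℝ) + 1) := by
    rw [← h2]
    apply mul_le_mul_of_nonneg_right h1 (le_of_lt hl1)
  rw [one_div, inv_mul_eq_div, div_mul_eq_mul_div, le_div_iff₀ hC, mul_comm]
  exact hineq
end
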